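/- Let r ≥ 0, n ≥ 1, let T be the r-dimensional torus, i.e. the product of r copies of the circle group {z ∈ ℂ : |z| = 1}, and let σ be a group automorphism of T with σⁿ = id. Then the kernel of the homomorphism φ' : T^σ → T/H (inclusion followed by quotient) is a finite group whose order divides nʳ. -/

import Mathlib

/-- For an abelian group `T` with automorphism `σ`, the homomorphism `q(t) = t σ(t)⁻¹`. -/
def qHom (T : Type*) [CommGroup T] (σ : T ≃* T) : T →* T where
  toFun t := t * (σ t)⁻¹
  map_one' := by simp
  map_mul' := by
    intro a b
    simp only [map_mul, mul_inv]
    exact mul_mul_mul_comm a b (σ a)⁻¹ (σ b)⁻¹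

private lemma iter_map_mul {T : Type*} [CommGroup T] (σ : T ≃* T) (m : ℕ) (a b : T) :
    (⇑σ)^[m] (a * b) = (⇑σ)^[m] a * (⇑σ)^[m] b := by
  induction m with
  | zero => simp
  | succ m ih => simp [Function.iterate_succ_apply', ih]

private lemma iter_map_inv {T : Type*} [CommGroup T] (σ : T ≃* T) (m : ℕ) (a : T) :
    (⇑σ)^[m] a⁻¹ = ((⇑σ)^[m] a)⁻¹ := by
  induction m with
  | zero => simp
  | succ m ih => simp [Function.iterate_succ_apply', ih]

/-- The subgroup of fixed points of an automorphism. -/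
private def fixedSubgroup {T : Type*} [CommGroup T] (σ : T ≃* T) : Subgroup T where
  carrier := {t | σ t = t}
  one_mem' := map_one σ
  mul_mem' := by intro a b ha hb; simp_all [map_mul]
  inv_mem' := by intro a ha; simp_all

private lemma pow_eq_one_of_fixed_of_range {T : Type*} [CommGroup T] (σ : T ≃* T) (n : ℕ)
    (hσn : ∀ t : T, (⇑σ)^[n] t = t) {t : T} (ht : σ t = t)
    (hr : t ∈ (qHom T σ).range) : t ^ n = 1 := by
  obtain ⟨s, hs⟩ := hr
  have hts : t = s * (σ s)⁻¹ := hs.symm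
  have key : ∀ m : ℕ, t ^ m = s * ((⇑σ)^[m] s)⁻¹ := by
    intro m
    induction m with
    | zero => simp
    | succ m ih =>
      have hfix : (⇑σ)^[m] t = t := Function.iterate_fixed ht m
      have ht' : t = (⇑σ)^[m] s * ((⇑σ)^[m + 1] s)⁻¹ := by
        conv_lhs => rw [← hfix, hts]
        rw [iter_map_mul, iter_map_inv, Function.iterate_succ_apply]
      calc t ^ (m + 1) = t ^ m * t := pow_succ t m
        _ = (s * ((⇑σ)^[m] s)⁻¹) * ((⇑σ)^[m] s * ((⇑σ)^[m + 1] s)⁻¹) := by rw [ih, ← ht']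
        _ = s * ((⇑σ)^[m + 1] s)⁻¹ := by group
  rw [key n, hσn s, mul_inv_cancel]

private lemma circle_pow_roots_card (n : ℕ) (hn : 1 ≤ n) :
    Nat.card {z : Circle // z ^ n = 1} = n := by
  haveI : NeZero n := ⟨by omega⟩
  let f : {z : Circle // z ^ n = 1} → rootsOfUnity n ℂ := fun z =>
    ⟨Circle.toUnits z.1, by
      rw [mem_rootsOfUnity, ← map_pow, z.2, map_one]⟩
  have hbij : Function.Bijective f := by
    constructor
    · intro a b hab
      have h1 : ((f a : ℂˣ) : ℂ) = ((f b : ℂˣ) : ℂ) := by rw [hab]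
      simp only [f, Circle.toUnits_apply, Units.val_mk0] at h1
      exact Subtype.ext (Circle.ext h1)
    · rintro ⟨ζ, hζ⟩
      rw [mem_rootsOfUnity] at hζ
      have hpow : ((ζ : ℂˣ) : ℂ) ^ n = 1 := by
        rw [← Units.val_pow_eq_pow_val, hζ, Units.val_one]
      have hnorm : ‖((ζ : ℂˣ) : ℂ)‖ = 1 := by
        have h1 : ‖((ζ : ℂˣ) : ℂ)‖ ^ n = 1 := by
          rw [← norm_pow, hpow, norm_one]
        have h2 := pow_eq_one_iff_cases.mp h1
        rcases h2 with h | h | h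
        · omega
        · exact h
        · nlinarith [norm_nonneg ((ζ : ℂˣ) : ℂ)]
      refine ⟨⟨⟨((ζ : ℂˣ) : ℂ), mem_sphere_zero_iff_norm.2 hnorm⟩, ?_⟩, ?_⟩
      · apply Circle.coe_injective
        exact hpow
      · apply Subtype.ext
        apply Units.ext
        rfl
  rw [Nat.card_congr (Equiv.ofBijective f hbij), 
    Complex.card_rootsOfUnity]

/-- Let `T` be the `r`-dimensional torus (a product of `r` copies of the circle group)
and `σ` an automorphism of `T` with `σⁿ = id`.  Then the kernel of the homomorphism
`φ' : T^σ → T/H` (inclusion followed by the quotient map, where `H = Im q`) is a finite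
group whose order divides `nʳ`. -/
theorem torus_ker_fixed_to_quotient_card_dvd
    (r n : ℕ) (hn : 1 ≤ n)
    (σ : (Fin r → Circle) ≃* (Fin r → Circle))
    (hσn : ∀ t : Fin r → Circle, (⇑σ)^[n] t = t) :
    Finite {t : Fin r → Circle // σ t = t ∧
        (QuotientGroup.mk t : (Fin r → Circle) ⧸ (qHom (Fin r → Circle) σ).range) = 1} ∧
    Nat.card {t : Fin r → Circle // σ t = t ∧
        (QuotientGroup.mk t : (Fin r → Circle) ⧸ (qHom (Fin r → Circle) σ).range) = 1} ∣
      n ^ r := by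
  haveI : NeZero n := ⟨by omega⟩
  set T := Fin r → Circle
  set S : Subgroup T := fixedSubgroup σ ⊓ (qHom T σ).range with hS
  set K : Subgroup T := (powMonoidHom n : T →* T).ker with hK
  -- the kernel subtype is equivalent to S
  have eqv : {t : T // σ t = t ∧
      (QuotientGroup.mk t : T ⧸ (qHom T σ).range) = 1} ≃ S :=
    Equiv.subtypeEquivRight fun t => by
      rw [QuotientGroup.eq_one_iff, hS, Subgroup.mem_inf]
      exact Iff.rfl
  -- S ≤ K
  have hSK : S ≤ K := by
    intro t ht
    rw [Subgroup.mem_inf] at ht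
    rw [hK, MonoidHom.mem_ker]
    exact pow_eq_one_of_fixed_of_range σ n hσn ht.1 ht.2
  -- K is equivalent to a product of n-th root sets
  have eqvK : (K : Type _) ≃ ∀ _ : Fin r, {z : Circle // z ^ n = 1} :=
    (Equiv.subtypeEquivRight fun t => by
      rw [hK, MonoidHom.mem_ker, powMonoidHom_apply, funext_iff]
      exact Iff.rfl).trans Equiv.subtypePiEquivPi
  haveI hfinroot : Finite {z : Circle // z ^ n = 1} := by
    apply Nat.finite_of_card_ne_zero
    rw [circle_pow_roots_card n hn]
    omega
  haveI hKfin : Finite K := Finite.of_equiv _ eqvK.symm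
  have hcardK : Nat.card K = n ^ r := by
    rw [Nat.card_congr eqvK, Nat.card_pi]
    simp [circle_pow_roots_card n hn]
  haveI hSfin : Finite S := Finite.of_injective _ (Subgroup.inclusion_injective hSK)
  refine ⟨Finite.of_equiv _ eqv.symm, ?_⟩
  rw [Nat.card_congr eqv, ← hcardK]
  exact Subgroup.card_dvd_of_le hSK
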